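/- With x₁ = (1−u³)/(4u) + t, x₂ = (1−u³)/(4u) − t, x₃ = −(u³+3)/(4u) + t, x₄ = (u⁶−6u³−3)/(4(u⁴−u)) − t, x₅ = (u⁹−u⁶+15u³+1)/(4(u⁷−u)) + t, and x₆ = −(x₁+⋯+x₅), the coefficient a₃ of X³ in ∏_{i=1}^{6}(X − x_i) equals −1, as elements of ℚ(t, u). -/
import Mathlib


open Polynomial

lemma coeff3_six {K : Type*} [CommRing K] (a b c d e f : K) :
    (((X - C a) * (X - C b) * (X - C c) * (X - C d) * (X - C e) * (X - C f))
      : Polynomial K).coeff 3 = -(a*b*c + a*b*d + a*b*e + a*b*f + a*c*d + a*c*e + a*c*f + a*d*e + a*d*f + a*e*f + b*c*d + b*c*e + b*c*f + b*d*e + b*d*f + b*e*f + c*d*e + c*d*f + c*e*f + d*e*f) := by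
  have h : ((X - C a) * (X - C b) * (X - C c) * (X - C d) * (X - C e) * (X - C f)
      : Polynomial K)
      = X ^ 6 + C (-(a + b + c + d + e + f)) * X ^ 5 + C (a*b + a*c + a*d + a*e + a*f + b*c + b*d + b*e + b*f + c*d + c*e + c*f + d*e + d*f + e*f) * X ^ 4
        + C (-(a*b*c + a*b*d + a*b*e + a*b*f + a*c*d + a*c*e + a*c*f + a*d*e + a*d*f + a*e*f + b*c*d + b*c*e + b*c*f + b*d*e + b*d*f + b*e*f + c*d*e + c*d*f + c*e*f + d*e*f)) * X ^ 3 + C (a*b*c*d + a*b*c*e + a*b*c*f + a*b*d*e + a*b*d*f + a*b*e*f + a*c*d*e + a*c*d*f + a*c*e*f + a*d*e*f + b*c*d*e + b*c*d*f + b*c*e*f + b*d*e*f + c*d*e*f) * X ^ 2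
        + C (-(a*b*c*d*e + a*b*c*d*f + a*b*c*e*f + a*b*d*e*f + a*c*d*e*f + b*c*d*e*f)) * X ^ 1 + C (a*b*c*d*e*f) := by
    simp only [map_add, map_mul, map_neg]
    ring
  rw [h]
  simp only [coeff_add, coeff_C_mul, coeff_X_pow, coeff_C]
  norm_num


lemma e3_split {K : Type*} [Field K] (a b d e t : K)
    (hQ : 2*a^2 + 2*a*b + 2*a*d + 2*a*e + b*d + b*e + d^2 + d*e = 0)
    (hP : 2*a^3 + 4*a^2*b + 4*a^2*d + 4*a^2*e + 2*a*b^2 + 4*a*b*d + 4*a*b*e + 2*a*d^2 + 4*a*d*e + 2*a*e^2 + b^2*d + b^2*e + b*d^2 + 2*b*d*e + b*e^2 + d^2*e + d*e^2 = -1) :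
    -((a + t)*(a - t)*(b + t) + (a + t)*(a - t)*(d - t) + (a + t)*(a - t)*(e + t) + (a + t)*(a - t)*(-((a + t) + (a - t) + (b + t) + (d - t) + (e + t))) + (a + t)*(b + t)*(d - t) + (a + t)*(b + t)*(e + t) + (a + t)*(b + t)*(-((a + t) + (a - t) + (b + t) + (d - t) + (e + t))) + (a + t)*(d - t)*(e + t) + (a + t)*(d - t)*(-((a + t) + (a - t) + (b + t) + (d - t) + (e + t))) + (a + t)*(e + t)*(-((a + t) + (a - t) + (b + t) + (d - t) + (e + t))) + (a - t)*(b + t)*(d - t) + (a - t)*(b + t)*(e + t) + (a - t)*(b + t)*(-((a + t) + (a - t) + (b + t) + (d - t) + (e + t))) + (a - t)*(d - t)*(e + t) + (a - t)*(d - t)*(-((a + t) + (a - t) + (b + t) + (d - t) + (e + t))) + (a - t)*(e + t)*(-((a + t) + (a - t) + (b + t) + (d - t) + (e + t))) + (b + t)*(d - t)*(e + t) + (b + t)*(d - t)*(-((a + t) + (a - t) + (b + t) + (d - t) + (e + t))) + (b + t)*(e + t)*(-((a + t) + (a - t) + (b + t) + (d - t) + (e + t))) + (d - t)*(e + t)*(-((a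 + t) + (a - t) + (b + t) + (d - t) + (e + t)))) = -1 := by
  have h : ((a + t)*(a - t)*(b + t) + (a + t)*(a - t)*(d - t) + (a + t)*(a - t)*(e + t) + (a + t)*(a - t)*(-((a + t) + (a - t) + (b + t) + (d - t) + (e + t))) + (a + t)*(b + t)*(d - t) + (a + t)*(b + t)*(e + t) + (a + t)*(b + t)*(-((a + t) + (a - t) + (b + t) + (d - t) + (e + t))) + (a + t)*(d - t)*(e + t) + (a + t)*(d - t)*(-((a + t) + (a - t) + (b + t) + (d - t) + (e + t))) + (a + t)*(e + t)*(-((a + t) + (a - t) + (b + t) + (d - t) + (e + t))) + (a - t)*(b + t)*(d - t) + (a - t)*(b + t)*(e + t) + (a - t)*(b + t)*(-((a + t) + (a - t) + (b + t) + (d - t) + (e + t))) + (a - t)*(d - t)*(e + t) + (a - t)*(d - t)*(-((a + t) + (a - t) + (b + t) + (d - t) + (e + t))) + (a - t)*(e + t)*(-((a + t) + (a - t) + (b + t) + (d - t) + (e + t))) + (b + t)*(d - t)*(e + t) + (b + t)*(d - t)*(-((a + t) + (a - t) + (b + t) + (d - t) + (e + t))) + (b + t)*(e + t)*(-((a + t)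 + (a - t) + (b + t) + (d - t) + (e + t))) + (d - t)*(e + t)*(-((a + t) + (a - t) + (b + t) + (d - t) + (e + t)))) = -(2*a^3 + 4*a^2*b + 4*a^2*d + 4*a^2*e + 2*a*b^2 + 4*a*b*d + 4*a*b*e + 2*a*d^2 + 4*a*d*e + 2*a*e^2 + b^2*d + b^2*e + b*d^2 + 2*b*d*e + b*e^2 + d^2*e + d*e^2) + t * (-2 * (2*a^2 + 2*a*b + 2*a*d + 2*a*e + b*d + b*e + d^2 + d*e)) := by ring
  rw [h, hQ, hP]
  ring

/- Mestre's specialization: in `ℚ(t, u)` (realized as `RatFunc (RatFunc ℚ)`, with `u` the inner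
variable and `t` the outer one), with `x₁, …, x₅` as below and `x₆ = -(x₁ + ⋯ + x₅)`, the
coefficient `a₃` of `X³` in `∏_{i=1}^{6} (X - xᵢ)` equals `-1`. -/
set_option maxHeartbeats 1000000 in
theorem stmt16 :
    ∀ u t x₁ x₂ x₃ x₄ x₅ x₆ : RatFunc (RatFunc ℚ),
      u = RatFunc.C (RatFunc.X : RatFunc ℚ) → t = RatFunc.X →
      x₁ = (1 - u ^ 3) / (4 * u) + t →
      x₂ = (1 - u ^ 3) / (4 * u) - t →
      x₃ = -((u ^ 3 + 3) / (4 * u)) + t →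
      x₄ = (u ^ 6 - 6 * u ^ 3 - 3) / (4 * (u ^ 4 - u)) - t →
      x₅ = (u ^ 9 - u ^ 6 + 15 * u ^ 3 + 1) / (4 * (u ^ 7 - u)) + t →
      x₆ = -(x₁ + x₂ + x₃ + x₄ + x₅) →
      ((X - C x₁) * (X - C x₂) * (X - C x₃) * (X - C x₄) * (X - C x₅) * (X - C x₆)
        : Polynomial (RatFunc (RatFunc ℚ))).coeff 3 = -1 := by
  intro u t x₁ x₂ x₃ x₄ x₅ x₆ hu ht h1 h2 h3 h4 h5 h6
  have hu0 : u ≠ 0 := by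
    rw [hu]
    exact fun h => RatFunc.X_ne_zero ((RatFunc.C (K := RatFunc ℚ)).injective (by simpa using h))
  have hu3 : u ^ 3 - 1 ≠ 0 := by
    rw [hu]
    have : (RatFunc.C (RatFunc.X : RatFunc ℚ)) ^ 3 - 1
        = RatFunc.C ((RatFunc.X : RatFunc ℚ) ^ 3 - 1) := by
      simp [map_sub, map_pow]
    rw [this]
    intro h
    have h2 : ((RatFunc.X : RatFunc ℚ) ^ 3 - 1) = 0 :=
      (RatFunc.C (K := RatFunc ℚ)).injective (by simpa using h)
    have h3 : (RatFunc.X : RatFunc ℚ) ^ 3 - 1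
        = algebraMap (Polynomial ℚ) (RatFunc ℚ) (Polynomial.X ^ 3 - 1) := by
      simp [map_sub, map_pow]
    rw [h3] at h2
    have h4 : (Polynomial.X ^ 3 - 1 : Polynomial ℚ) ≠ 0 := fun hh => by
      simpa [Polynomial.coeff_one] using congrArg (fun p => Polynomial.coeff p 3) hh
    exact RatFunc.algebraMap_ne_zero h4 h2
  have hu6 : u ^ 6 - 1 ≠ 0 := by
    rw [hu]
    have : (RatFunc.C (RatFunc.X : RatFunc ℚ)) ^ 6 - 1
        = RatFunc.C ((RatFunc.X : RatFunc ℚ) ^ 6 - 1) := by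
      simp [map_sub, map_pow]
    rw [this]
    intro h
    have h2 : ((RatFunc.X : RatFunc ℚ) ^ 6 - 1) = 0 :=
      (RatFunc.C (K := RatFunc ℚ)).injective (by simpa using h)
    have h3 : (RatFunc.X : RatFunc ℚ) ^ 6 - 1
        = algebraMap (Polynomial ℚ) (RatFunc ℚ) (Polynomial.X ^ 6 - 1) := by
      simp [map_sub, map_pow]
    rw [h3] at h2
    have h4 : (Polynomial.X ^ 6 - 1 : Polynomial ℚ) ≠ 0 := fun hh => by
      simpa [Polynomial.coeff_one] using congrArg (fun p => Polynomial.coeff p 6) hh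
    exact RatFunc.algebraMap_ne_zero h4 h2
  have hfour : (4 : RatFunc (RatFunc ℚ)) ≠ 0 := by
    have e1 : (4 : RatFunc (RatFunc ℚ)) = RatFunc.C (RatFunc.C (4 : ℚ)) := by
      simp [map_ofNat]
    rw [e1]
    intro h
    have h2 : (RatFunc.C (4 : ℚ)) = 0 :=
      (RatFunc.C (K := RatFunc ℚ)).injective (by simpa using h)
    exact (by norm_num : (4 : ℚ) ≠ 0) ((RatFunc.C (K := ℚ)).injective (by simpa using h2))
  have d1 : (4 : RatFunc (RatFunc ℚ)) * u ≠ 0 := by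
    exact mul_ne_zero hfour hu0
  have d2 : (4 : RatFunc (RatFunc ℚ)) * (u ^ 4 - u) ≠ 0 := by
    have : u ^ 4 - u = u * (u ^ 3 - 1) := by ring
    rw [this]
    exact mul_ne_zero hfour (mul_ne_zero hu0 hu3)
  have d3 : (4 : RatFunc (RatFunc ℚ)) * (u ^ 7 - u) ≠ 0 := by
    have : u ^ 7 - u = u * (u ^ 6 - 1) := by ring
    rw [this]
    exact mul_ne_zero hfour (mul_ne_zero hu0 hu6)
  have hA : (1 - u ^ 3) / (4 * u)
      = ((1 - u ^ 3) * (u ^ 6 - 1)) / (4 * (u ^ 7 - u)) := by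
    rw [div_eq_div_iff d1 d3]; ring
  have hB : (u ^ 3 + 3) / (4 * u)
      = ((u ^ 3 + 3) * (u ^ 6 - 1)) / (4 * (u ^ 7 - u)) := by
    rw [div_eq_div_iff d1 d3]; ring
  have hD : (u ^ 6 - 6 * u ^ 3 - 3) / (4 * (u ^ 4 - u))
      = ((u ^ 6 - 6 * u ^ 3 - 3) * (u ^ 3 + 1)) / (4 * (u ^ 7 - u)) := by
    rw [div_eq_div_iff d2 d3]; ring
  have hv : (4 * (u ^ 7 - u)) * (4 * (u ^ 7 - u))⁻¹ = 1 := mul_inv_cancel₀ d3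
  have hQ : 2*((1 - u ^ 3) / (4 * u))^2 + 2*((1 - u ^ 3) / (4 * u))*(-((u ^ 3 + 3) / (4 * u))) + 2*((1 - u ^ 3) / (4 * u))*((u ^ 6 - 6 * u ^ 3 - 3) / (4 * (u ^ 4 - u))) + 2*((1 - u ^ 3) / (4 * u))*((u ^ 9 - u ^ 6 + 15 * u ^ 3 + 1) / (4 * (u ^ 7 - u))) + (-((u ^ 3 + 3) / (4 * u)))*((u ^ 6 - 6 * u ^ 3 - 3) / (4 * (u ^ 4 - u))) + (-((u ^ 3 + 3) / (4 * u)))*((u ^ 9 - u ^ 6 + 15 * u ^ 3 + 1) / (4 * (u ^ 7 - u))) + ((u ^ 6 - 6 * u ^ 3 - 3) / (4 * (u ^ 4 - u)))^2 + ((u ^ 6 - 6 * u ^ 3 - 3) / (4 * (u ^ 4 - u)))*((u ^ 9 - u ^ 6 + 15 * u ^ 3 + 1) / (4 * (u ^ 7 - u))) = (0 : RatFunc (RatFunc ℚ)) := by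
    rw [hA, hB, hD]
    simp only [div_eq_mul_inv]
    ring
  have hP : 2*((1 - u ^ 3) / (4 * u))^3 + 4*((1 - u ^ 3) / (4 * u))^2*(-((u ^ 3 + 3) / (4 * u))) + 4*((1 - u ^ 3) / (4 * u))^2*((u ^ 6 - 6 * u ^ 3 - 3) / (4 * (u ^ 4 - u))) + 4*((1 - u ^ 3) / (4 * u))^2*((u ^ 9 - u ^ 6 + 15 * u ^ 3 + 1) / (4 * (u ^ 7 - u))) + 2*((1 - u ^ 3) / (4 * u))*(-((u ^ 3 + 3) / (4 * u)))^2 + 4*((1 - u ^ 3) / (4 * u))*(-((u ^ 3 + 3) / (4 * u)))*((u ^ 6 - 6 * u ^ 3 - 3) / (4 * (u ^ 4 - u))) + 4*((1 - u ^ 3) / (4 * u))*(-((u ^ 3 + 3) / (4 * u)))*((u ^ 9 - u ^ 6 + 15 * u ^ 3 + 1) / (4 * (u ^ 7 - u))) + 2*((1 - u ^ 3) / (4 * u))*((u ^ 6 - 6 * u ^ 3 - 3) / (4 * (u ^ 4 - u)))^2 + 4*((1 - u ^ 3) / (4 * u))*((u ^ 6 - 6 * u ^ 3 - 3) / (4 *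 (u ^ 4 - u)))*((u ^ 9 - u ^ 6 + 15 * u ^ 3 + 1) / (4 * (u ^ 7 - u))) + 2*((1 - u ^ 3) / (4 * u))*((u ^ 9 - u ^ 6 + 15 * u ^ 3 + 1) / (4 * (u ^ 7 - u)))^2 + (-((u ^ 3 + 3) / (4 * u)))^2*((u ^ 6 - 6 * u ^ 3 - 3) / (4 * (u ^ 4 - u))) + (-((u ^ 3 + 3) / (4 * u)))^2*((u ^ 9 - u ^ 6 + 15 * u ^ 3 + 1) / (4 * (u ^ 7 - u))) + (-((u ^ 3 + 3) / (4 * u)))*((u ^ 6 - 6 * u ^ 3 - 3) / (4 * (u ^ 4 - u)))^2 + 2*(-((u ^ 3 + 3) / (4 * u)))*((u ^ 6 - 6 * u ^ 3 - 3) / (4 * (u ^ 4 - u)))*((u ^ 9 - u ^ 6 + 15 * u ^ 3 + 1) / (4 * (u ^ 7 - u))) + (-((u ^ 3 + 3) / (4 * u)))*((u ^ 9 - u ^ 6 + 15 * u ^ 3 + 1) / (4 * (u ^ 7 - u)))^2 + ((u ^ 6 - 6 * u ^ 3 - 3) / (4 * (u ^ 4 - u)))^2*((u ^ 9 - u ^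 6 + 15 * u ^ 3 + 1) / (4 * (u ^ 7 - u))) + ((u ^ 6 - 6 * u ^ 3 - 3) / (4 * (u ^ 4 - u)))*((u ^ 9 - u ^ 6 + 15 * u ^ 3 + 1) / (4 * (u ^ 7 - u)))^2 = (-1 : RatFunc (RatFunc ℚ)) := by
    rw [hA, hB, hD]
    simp only [div_eq_mul_inv]
    linear_combination (-((4 * (u ^ 7 - u)) ^ 2 * ((4 * (u ^ 7 - u))⁻¹) ^ 2
      + (4 * (u ^ 7 - u)) * (4 * (u ^ 7 - u))⁻¹ + 1)) * hv
  rw [coeff3_six, h6, h1, h2, h3, h4, h5]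
  exact e3_split ((1 - u ^ 3) / (4 * u)) (-((u ^ 3 + 3) / (4 * u))) ((u ^ 6 - 6 * u ^ 3 - 3) / (4 * (u ^ 4 - u))) ((u ^ 9 - u ^ 6 + 15 * u ^ 3 + 1) / (4 * (u ^ 7 - u))) t hQ hP
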